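/- Let E be the Banach algebra of continuous ℂ-linear endomorphisms of a nontrivial finite-dimensional complex normed space (with composition as multiplication, identity 1, and exponential exp). Let Γ_1, …, Γ_k ∈ E be pairwise commuting and suppose that for all 1 ≤ a ≤ b ≤ k the consecutive sum S_{a,b} := Σ_{i=a}^{b} Γ_i is invertible in E. Then for every t ∈ ℝ the iterated Bochner integral ∫_0^t dt_1 ∫_0^{t_1} dt_2 ⋯ ∫_0^{t_{k−1}} dt_k exp(−Σ_{j=1}^{k} t_j Γ_j) equals ∏_{n=1}^{k} S_{1,n}^{−1} + Σ_{p=1}^{k} (−1)^p exp(−t S_{1,p}) · (∏_{m=1}^{p} S_{m,p}^{−1}) · (∏_{n=p+1}^{k} S_{p+1,n}^{−1}), where all factors commute, products are taken in the indicated order, and empty products equal 1. -/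

import Mathlib

open MeasureTheory

/-- Iterated time-ordered Bochner integral
`∫_0^t dt_1 ∫_0^{t_1} dt_2 ⋯ ∫_0^{t_{k-1}} dt_k exp(-(A + Σ_j t_j Γ_j))`
of the operator-valued integrand, with accumulated exponent `A`
(so that `iterE [Γ_1,…,Γ_k] 0 t` is the iterated integral of `exp(-Σ_j t_j Γ_j)`). -/
noncomputable def iterE {V : Type*} [NormedAddCommGroup V] [NormedSpace ℂ V] :
    List (V →L[ℂ] V) → (V →L[ℂ] V) → ℝ → (V →L[ℂ] V)
  | [], A, _ => NormedSpace.exp (-A)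
  | Γ :: Γs, A, t => ∫ s in (0:ℝ)..t, iterE Γs (A + s • Γ) s


section Stmt2AuxSec
open Finset MeasureTheory NormedSpace
namespace Stmt2Aux




variable {R : Type*}

theorem ring_inverse_neg [Ring R] {a : R} (h : IsUnit a) :
    Ring.inverse (-a) = - Ring.inverse a := by
  calc Ring.inverse (-a) = Ring.inverse (-a) * ((-a) * (- Ring.inverse a)) := by
        rw [neg_mul_neg, Ring.mul_inverse_cancel a h, mul_one]
    _ = (Ring.inverse (-a) * (-a)) * (- Ring.inverse a) := (mul_assoc _ _ _).symm
    _ = - Ring.inverse a := by rw [Ring.inverse_mul_cancel _ h.neg, one_mul]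

theorem commute_ring_inverse_right [Ring R] {x y : R} (h : Commute x y) (hy : IsUnit y) :
    Commute x (Ring.inverse y) := by
  obtain ⟨u, rfl⟩ := hy
  rw [Ring.inverse_unit]
  exact h.units_inv_right

theorem map_ring_inverse {S : Type*} [Ring R] [Ring S] (f : R →+* S) {a : R} (h : IsUnit a) :
    f (Ring.inverse a) = Ring.inverse (f a) := by
  obtain ⟨u, rfl⟩ := h
  have h1 : f ↑u = ↑(Units.map (f : R →* S) u) := rfl
  rw [Ring.inverse_unit, h1, Ring.inverse_unit, ← map_inv (Units.map (f : R →* S)) u]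
  rfl

theorem list_prod_range {M : Type*} [CommMonoid M] (f : ℕ → M) (n : ℕ) :
    ((List.range n).map f).prod = ∏ i ∈ Finset.range n, f i := by
  induction n with
  | zero => simp
  | succ n ih => rw [List.prod_range_succ, Finset.prod_range_succ, ih]

theorem sum_Icc_one {M : Type*} [AddCommMonoid M] (f : ℕ → M) (k : ℕ) :
    ∑ p ∈ Icc 1 k, f p = ∑ q ∈ range k, f (q + 1) := by
  rw [← Finset.Ico_add_one_right_eq_Icc, Finset.sum_Ico_eq_sum_range]
  exact Finset.sum_congr (by norm_num) fun i _ => by rw [Nat.add_comm]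

theorem inv_mul_inv_frac [CommRing R] {a b : R} (ha : IsUnit a) (hb : IsUnit b)
    (hba : IsUnit (b - a)) :
    Ring.inverse a * Ring.inverse b
      = Ring.inverse (b - a) * (Ring.inverse a - Ring.inverse b) := by
  have h1 : Ring.inverse a - Ring.inverse b = Ring.inverse a * (b - a) * Ring.inverse b := by
    rw [mul_sub, Ring.inverse_mul_cancel _ ha, sub_mul, one_mul, mul_assoc,
      Ring.mul_inverse_cancel _ hb, mul_one]
  have h2 : Ring.inverse (b - a) * (Ring.inverse a * (b - a) * Ring.inverse b)
      = (Ring.inverse (b - a) * (b - a)) * (Ring.inverse a * Ring.inverse b) := by ring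
  rw [h1, h2, Ring.inverse_mul_cancel _ hba, one_mul]

theorem pfd [CommRing R] :
    ∀ (n : ℕ) (σ : ℕ → R) (x : R), 1 ≤ n →
    (∀ q, q < n → IsUnit (x + σ q)) →
    (∀ j, j < n → ∀ q, q < n → j ≠ q → IsUnit (σ j - σ q)) →
    ∏ q ∈ range n, Ring.inverse (x + σ q)
      = ∑ q ∈ range n,
          (∏ j ∈ (range n).erase q, Ring.inverse (σ j - σ q)) * Ring.inverse (x + σ q) := by
  intro n
  induction n with
  | zero => intro σ x h; omega
  | succ n ih =>
    intro σ x _ hx hσ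
    rcases Nat.eq_zero_or_pos n with rfl | hn
    · simp
    have hx' : ∀ q, q < n → IsUnit (x + σ q) := fun q hq => hx q (by omega)
    have hσ' : ∀ j, j < n → ∀ q, q < n → j ≠ q → IsUnit (σ j - σ q) :=
      fun j hj q hq hne => hσ j (by omega) q (by omega) hne
    have hcc' : ∀ q, q < n →
        (∏ j ∈ (range (n+1)).erase q, Ring.inverse (σ j - σ q))
          = (∏ j ∈ (range n).erase q, Ring.inverse (σ j - σ q)) * Ring.inverse (σ n - σ q) := by
      intro q hq
      have hset : (range (n+1)).erase q = insert n ((range n).erase q) := by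
        ext j
        simp only [mem_erase, mem_range, mem_insert]
        omega
      have hnot : n ∉ (range n).erase q := by simp
      rw [hset, prod_insert hnot, mul_comm]
    have hcn : (∏ j ∈ (range (n+1)).erase n, Ring.inverse (σ j - σ n))
        = ∏ j ∈ range n, Ring.inverse (σ j - σ n) := by
      rw [Finset.range_add_one, Finset.erase_insert (by simp)]
    -- G : sum of all new coefficients vanishes
    have hG : ∑ q ∈ range n,
        (∏ j ∈ (range (n+1)).erase q, Ring.inverse (σ j - σ q))
        = - ∏ j ∈ (range (n+1)).erase n, Ring.inverse (σ j - σ n) := by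
      have h2 := ih σ (-σ n) hn
        (fun q hq => by
          have h3 := hσ n (by omega) q (by omega) (by omega)
          rwa [neg_add_eq_sub, ← neg_sub (σ n) (σ q), IsUnit.neg_iff])
        hσ'
      simp only [neg_add_eq_sub] at h2
      have h3 : ∀ q ∈ range n,
          (∏ j ∈ (range n).erase q, Ring.inverse (σ j - σ q)) * Ring.inverse (σ q - σ n)
            = -(∏ j ∈ (range (n+1)).erase q, Ring.inverse (σ j - σ q)) := by
        intro q hq
        rw [mem_range] at hq
        rw [← neg_sub (σ n) (σ q), ring_inverse_neg (hσ n (by omega) q (by omega) (by omega)),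
          mul_neg, hcc' q hq]
      rw [Finset.sum_congr rfl h3, Finset.sum_neg_distrib] at h2
      rw [hcn, h2, neg_neg]
    -- main computation
    rw [Finset.prod_range_succ, ih σ x hn hx' hσ', Finset.sum_mul, Finset.sum_range_succ]
    have hterm : ∀ q ∈ range n,
        ((∏ j ∈ (range n).erase q, Ring.inverse (σ j - σ q)) * Ring.inverse (x + σ q))
            * Ring.inverse (x + σ n)
          = (∏ j ∈ (range (n+1)).erase q, Ring.inverse (σ j - σ q)) * Ring.inverse (x + σ q)
            - (∏ j ∈ (range (n+1)).erase q, Ring.inverse (σ j - σ q)) * Ring.inverse (x + σ n) := by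
      intro q hq
      rw [mem_range] at hq
      have hba : IsUnit ((x + σ n) - (x + σ q)) := by
        rw [add_sub_add_left_eq_sub]
        exact hσ n (by omega) q (by omega) (by omega)
      have hfrac := inv_mul_inv_frac (hx q (by omega)) (hx n (by omega)) hba
      rw [add_sub_add_left_eq_sub] at hfrac
      rw [mul_assoc, hfrac, hcc' q hq]
      ring
    rw [Finset.sum_congr rfl hterm, Finset.sum_sub_distrib, ← Finset.sum_mul, hG]
    ring

theorem idty [CommRing R] (k : ℕ) (hk : 1 ≤ k) (γ : ℕ → R)
    (hinv : ∀ a b, 1 ≤ a → a ≤ b → b ≤ k → IsUnit (∑ i ∈ Icc a b, γ i)) :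
    ((List.range k).map fun n => Ring.inverse (∑ i ∈ Icc 1 (n + 1), γ i)).prod
      + ∑ p ∈ Icc 1 k, (-1 : R) ^ p
          * ((List.range p).map fun m => Ring.inverse (∑ i ∈ Icc (m + 1) p, γ i)).prod
          * ((List.range (k - p)).map fun n =>
              Ring.inverse (∑ j ∈ Icc (p + 1) (p + 1 + n), γ j)).prod = 0 := by
  set σ : ℕ → R := fun q => ∑ i ∈ Ioc 1 (q+1), γ i with hσdef
  have hg1 : ∀ q, γ 1 + σ q = ∑ i ∈ Icc 1 (q+1), γ i := by
    intro q
    rw [Finset.Icc_eq_cons_Ioc (by omega), Finset.sum_cons, hσdef]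
  have hg2 : ∀ q j, q ≤ j → σ j - σ q = ∑ i ∈ Icc (q+2) (j+1), γ i := by
    intro q j h
    have h2 : σ q + ∑ i ∈ Ioc (q+1) (j+1), γ i = σ j :=
      Finset.sum_Ioc_consecutive γ (by omega) (by omega)
    rw [← h2, show q+2 = (q+1)+1 from rfl, Finset.Icc_add_one_left_eq_Ioc]
    ring
  have hxu : ∀ q, q < k → IsUnit (γ 1 + σ q) := fun q hq => by
    rw [hg1]; exact hinv 1 (q+1) le_rfl (by omega) (by omega)
  have hσu : ∀ j, j < k → ∀ q, q < k → j ≠ q → IsUnit (σ j - σ q) := by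
    intro j hj q hq hne
    rcases lt_or_gt_of_ne hne with h | h
    · rw [← neg_sub (σ q) (σ j), IsUnit.neg_iff, hg2 j q (by omega)]
      exact hinv (j+2) (q+1) (by omega) (by omega) (by omega)
    · rw [hg2 q j (by omega)]
      exact hinv (q+2) (j+1) (by omega) (by omega) (by omega)
  have hpfd := pfd k σ (γ 1) hk hxu hσu
  have hC : ((List.range k).map fun n => Ring.inverse (∑ i ∈ Icc 1 (n + 1), γ i)).prod
      = ∏ q ∈ range k, Ring.inverse (γ 1 + σ q) := by
    rw [list_prod_range]
    exact Finset.prod_congr rfl fun q _ => by rw [hg1]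
  have hterm : ∀ q ∈ range k,
      (-1 : R) ^ (q+1)
          * ((List.range (q+1)).map fun m => Ring.inverse (∑ i ∈ Icc (m + 1) (q+1), γ i)).prod
          * ((List.range (k - (q+1))).map fun n =>
              Ring.inverse (∑ j ∈ Icc ((q+1) + 1) ((q+1) + 1 + n), γ j)).prod
        = -((∏ j ∈ (range k).erase q, Ring.inverse (σ j - σ q)) * Ring.inverse (γ 1 + σ q)) := by
    intro q hq
    rw [mem_range] at hq
    -- split the erased product
    have hsplit : (range k).erase q = (range q) ∪ (Ico (q+1) k) := by
      ext j
      simp only [mem_erase, mem_range, mem_union, mem_Ico]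
      omega
    have hdisj : Disjoint (range q) (Ico (q+1) k) := by
      rw [Finset.disjoint_left]
      intro j hj1 hj2
      rw [mem_range] at hj1
      rw [mem_Ico] at hj2
      omega
    have hA : ∏ j ∈ range q, Ring.inverse (σ j - σ q)
        = (-1 : R)^q * ∏ j ∈ range q, Ring.inverse (∑ i ∈ Icc (j+2) (q+1), γ i) := by
      have := fun (j : ℕ) (hj : j ∈ range q) => by
        rw [mem_range] at hj
        calc Ring.inverse (σ j - σ q) = Ring.inverse (-(σ q - σ j)) := by rw [neg_sub]
          _ = (-1 : R) * Ring.inverse (∑ i ∈ Icc (j+2) (q+1), γ i) := by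
              rw [hg2 j q (by omega), ring_inverse_neg
                (hinv (j+2) (q+1) (by omega) (by omega) (by omega)), neg_eq_neg_one_mul]
      rw [Finset.prod_congr rfl this, Finset.prod_mul_distrib, Finset.prod_const,
        Finset.card_range]
    have hB : ((List.range (k - (q+1))).map fun n =>
          Ring.inverse (∑ j ∈ Icc ((q+1) + 1) ((q+1) + 1 + n), γ j)).prod
        = ∏ j ∈ Ico (q+1) k, Ring.inverse (σ j - σ q) := by
      rw [list_prod_range, Finset.prod_Ico_eq_prod_range]
      refine Finset.prod_congr rfl fun i _ => ?_
      have e : Icc ((q+1) + 1) ((q+1) + 1 + i) = Icc (q+2) ((q+1+i)+1) := by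
        congr 1
        omega
      rw [e, hg2 q (q+1+i) (by omega)]
    have hP : ((List.range (q+1)).map fun m =>
          Ring.inverse (∑ i ∈ Icc (m + 1) (q+1), γ i)).prod
        = Ring.inverse (γ 1 + σ q)
          * ∏ j ∈ range q, Ring.inverse (∑ i ∈ Icc (j+2) (q+1), γ i) := by
      rw [List.prod_range_succ', list_prod_range, hg1]
    rw [hsplit, Finset.prod_union hdisj, hA, hP, ← hB, pow_succ]
    ring
  have hreindex := sum_Icc_one (fun p => (-1:R)^p
      * ((List.range p).map fun m => Ring.inverse (∑ i ∈ Icc (m + 1) p, γ i)).prod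
      * ((List.range (k - p)).map fun n =>
          Ring.inverse (∑ j ∈ Icc (p + 1) (p + 1 + n), γ j)).prod) k
  simp only [hreindex]
  rw [hC, Finset.sum_congr rfl hterm, Finset.sum_neg_distrib, ← hpfd, add_neg_cancel]





variable {R : Type*}

theorem inv_Icc_congr [Ring R] (γ : ℕ → R) {a b a' b' : ℕ} (ha : a = a') (hb : b = b') :
    Ring.inverse (∑ j ∈ Icc a b, γ j) = Ring.inverse (∑ j ∈ Icc a' b', γ j) := by rw [ha, hb]

theorem main_alg [CommRing R] (k : ℕ) (γ : ℕ → R) (e : ℕ → R)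
    (hinv : ∀ a b, 1 ≤ a → a ≤ b → b ≤ k + 1 → IsUnit (∑ i ∈ Icc a b, γ i)) :
    Ring.inverse (∑ i ∈ Icc 1 1, γ i) * (1 - e 1)
        * ((List.range k).map fun n => Ring.inverse (∑ i ∈ Icc 2 (n+2), γ i)).prod
      + ∑ p ∈ Icc 1 k, (-1:R)^p * (Ring.inverse (∑ i ∈ Icc 1 (p+1), γ i) * (1 - e (p+1)))
          * (((List.range p).map fun m => Ring.inverse (∑ i ∈ Icc (m+2) (p+1), γ i)).prod
             * ((List.range (k-p)).map fun n => Ring.inverse (∑ i ∈ Icc (p+2) (p+2+n), γ i)).prod)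
    = ((List.range (k+1)).map fun n => Ring.inverse (∑ i ∈ Icc 1 (n + 1), γ i)).prod
      + ∑ p ∈ Icc 1 (k+1), (-1:R)^p * e p
          * ((List.range p).map fun m => Ring.inverse (∑ i ∈ Icc (m + 1) p, γ i)).prod
          * ((List.range (k+1-p)).map fun n =>
              Ring.inverse (∑ i ∈ Icc (p + 1) (p + 1 + n), γ i)).prod := by
  simp only [list_prod_range]
  set F : ℕ → R := fun p => (-1:R)^p * (e p - 1)
    * ((∏ m ∈ range p, Ring.inverse (∑ i ∈ Icc (m+1) p, γ i))
       * (∏ n ∈ range (k+1-p), Ring.inverse (∑ i ∈ Icc (p+1) (p+1+n), γ i))) with hF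
  have hC : (∏ n ∈ range (k+1), Ring.inverse (∑ i ∈ Icc 1 (n+1), γ i))
      = - ∑ p ∈ Icc 1 (k+1), (-1:R)^p
            * (∏ m ∈ range p, Ring.inverse (∑ i ∈ Icc (m+1) p, γ i))
            * (∏ n ∈ range (k+1-p), Ring.inverse (∑ i ∈ Icc (p+1) (p+1+n), γ i)) := by
    have hid := idty (k+1) (by omega) γ hinv
    simp only [list_prod_range] at hid
    linear_combination hid
  have hRHS : (∏ n ∈ range (k+1), Ring.inverse (∑ i ∈ Icc 1 (n+1), γ i))
      + ∑ p ∈ Icc 1 (k+1), (-1:R)^p * e p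
          * (∏ m ∈ range p, Ring.inverse (∑ i ∈ Icc (m + 1) p, γ i))
          * (∏ n ∈ range (k+1-p), Ring.inverse (∑ i ∈ Icc (p + 1) (p + 1 + n), γ i))
      = ∑ p ∈ Icc 1 (k+1), F p := by
    rw [hC, neg_add_eq_sub, ← Finset.sum_sub_distrib]
    exact Finset.sum_congr rfl fun p _ => by simp only [hF]; ring
  refine Eq.trans ?_ hRHS.symm
  have hre := sum_Icc_one (fun p => (-1:R)^p * (Ring.inverse (∑ i ∈ Icc 1 (p+1), γ i) * (1 - e (p+1)))
          * ((∏ m ∈ range p, Ring.inverse (∑ i ∈ Icc (m+2) (p+1), γ i))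
             * (∏ n ∈ range (k-p), Ring.inverse (∑ i ∈ Icc (p+2) (p+2+n), γ i)))) k
  simp only [hre]
  rw [sum_Icc_one F (k+1), Finset.sum_range_succ']
  have hhead : Ring.inverse (∑ i ∈ Icc 1 1, γ i) * (1 - e 1)
      * (∏ n ∈ range k, Ring.inverse (∑ i ∈ Icc 2 (n+2), γ i)) = F (0 + 1) := by
    have h1 : ∏ n ∈ range k, Ring.inverse (∑ i ∈ Icc 2 (n+2), γ i)
        = ∏ n ∈ range k, Ring.inverse (∑ i ∈ Icc (1+1) (1+1+n), γ i) := by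
      exact Finset.prod_congr rfl fun n _ => inv_Icc_congr γ (by omega) (by omega)
    simp only [hF]
    simp only [Nat.reduceAdd, Finset.prod_range_one, Nat.add_sub_cancel, pow_one]
    rw [h1]
    ring
  have hterm : ∀ q ∈ range k,
      (-1:R)^(q+1) * (Ring.inverse (∑ i ∈ Icc 1 ((q+1)+1), γ i) * (1 - e ((q+1)+1)))
          * ((∏ m ∈ range (q+1), Ring.inverse (∑ i ∈ Icc (m+2) ((q+1)+1), γ i))
             * (∏ n ∈ range (k-(q+1)), Ring.inverse (∑ i ∈ Icc ((q+1)+2) ((q+1)+2+n), γ i)))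
        = F ((q+1)+1) := by
    intro q hq
    simp only [hF]
    rw [Finset.prod_range_succ' (fun m => Ring.inverse (∑ i ∈ Icc (m+1) (q+1+1), γ i)) (q+1)]
    have h2 : ∏ n ∈ range (k+1-(q+1+1)), Ring.inverse (∑ i ∈ Icc ((q+1+1)+1) ((q+1+1)+1+n), γ i)
        = ∏ n ∈ range (k-(q+1)), Ring.inverse (∑ i ∈ Icc ((q+1)+2) ((q+1)+2+n), γ i) := by
      rw [show k+1-(q+1+1) = k-(q+1) by omega]
    have h3 : ∏ m ∈ range (q+1), Ring.inverse (∑ i ∈ Icc (m+1+1) (q+1+1), γ i)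
        = ∏ m ∈ range (q+1), Ring.inverse (∑ i ∈ Icc (m+2) ((q+1)+1), γ i) := rfl
    rw [h2, h3]
    simp only [Nat.reduceAdd]
    ring
  rw [Finset.sum_congr rfl hterm, hhead, add_comm]



theorem main_alg' [Ring R] (hc : ∀ x y : R, x * y = y * x) (k : ℕ) (γ : ℕ → R) (e : ℕ → R)
    (hinv : ∀ a b, 1 ≤ a → a ≤ b → b ≤ k + 1 → IsUnit (∑ i ∈ Icc a b, γ i)) :
    Ring.inverse (∑ i ∈ Icc 1 1, γ i) * (1 - e 1)
        * ((List.range k).map fun n => Ring.inverse (∑ i ∈ Icc 2 (n+2), γ i)).prod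
      + ∑ p ∈ Icc 1 k, (-1:R)^p * (Ring.inverse (∑ i ∈ Icc 1 (p+1), γ i) * (1 - e (p+1)))
          * (((List.range p).map fun m => Ring.inverse (∑ i ∈ Icc (m+2) (p+1), γ i)).prod
             * ((List.range (k-p)).map fun n => Ring.inverse (∑ i ∈ Icc (p+2) (p+2+n), γ i)).prod)
    = ((List.range (k+1)).map fun n => Ring.inverse (∑ i ∈ Icc 1 (n + 1), γ i)).prod
      + ∑ p ∈ Icc 1 (k+1), (-1:R)^p * e p
          * ((List.range p).map fun m => Ring.inverse (∑ i ∈ Icc (m + 1) p, γ i)).prod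
          * ((List.range (k+1-p)).map fun n =>
              Ring.inverse (∑ i ∈ Icc (p + 1) (p + 1 + n), γ i)).prod := by
  letI : CommRing R := { ‹Ring R› with mul_comm := hc }
  exact main_alg k γ e hinv





theorem main_alg_E {E : Type*} [Ring E] [Algebra ℂ E] (k : ℕ) (Γ : ℕ → E) (e : ℕ → E)
    (hcomm : ∀ i j, 1 ≤ i → i ≤ k+1 → 1 ≤ j → j ≤ k+1 → Commute (Γ i) (Γ j))
    (hinv : ∀ a b, 1 ≤ a → a ≤ b → b ≤ k + 1 → IsUnit (∑ i ∈ Icc a b, Γ i))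
    (heΓ : ∀ p, p ≤ k+1 → ∀ j, 1 ≤ j → j ≤ k+1 → Commute (e p) (Γ j))
    (hee : ∀ p q, p ≤ k+1 → q ≤ k+1 → Commute (e p) (e q)) :
    Ring.inverse (∑ i ∈ Icc 1 1, Γ i) * (1 - e 1)
        * ((List.range k).map fun n => Ring.inverse (∑ i ∈ Icc 2 (n+2), Γ i)).prod
      + ∑ p ∈ Icc 1 k, (-1:E)^p * (Ring.inverse (∑ i ∈ Icc 1 (p+1), Γ i) * (1 - e (p+1)))
          * (((List.range p).map fun m => Ring.inverse (∑ i ∈ Icc (m+2) (p+1), Γ i)).prod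
             * ((List.range (k-p)).map fun n => Ring.inverse (∑ i ∈ Icc (p+2) (p+2+n), Γ i)).prod)
    = ((List.range (k+1)).map fun n => Ring.inverse (∑ i ∈ Icc 1 (n + 1), Γ i)).prod
      + ∑ p ∈ Icc 1 (k+1), (-1:E)^p * e p
          * ((List.range p).map fun m => Ring.inverse (∑ i ∈ Icc (m + 1) p, Γ i)).prod
          * ((List.range (k+1-p)).map fun n =>
              Ring.inverse (∑ i ∈ Icc (p + 1) (p + 1 + n), Γ i)).prod := by
  classical
  set s : Set E := {x | (∃ i, 1 ≤ i ∧ i ≤ k+1 ∧ x = Γ i)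
      ∨ (∃ a b, 1 ≤ a ∧ a ≤ b ∧ b ≤ k+1 ∧ x = Ring.inverse (∑ i ∈ Icc a b, Γ i))
      ∨ (∃ p, p ≤ k+1 ∧ x = e p)} with hs
  have hxΓ : ∀ x ∈ s, ∀ j, 1 ≤ j → j ≤ k+1 → Commute x (Γ j) := by
    rintro x (⟨i, h1, h2, rfl⟩ | ⟨a, b, h1, h2, h3, rfl⟩ | ⟨p, h1, rfl⟩) j hj1 hj2
    · exact hcomm i j h1 h2 hj1 hj2
    · exact (commute_ring_inverse_right
        (Commute.sum_right _ _ _ fun i hi => by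
          rw [mem_Icc] at hi
          exact hcomm j i hj1 hj2 (by omega) (by omega)) (hinv a b h1 h2 h3)).symm
    · exact heΓ p h1 j hj1 hj2
  have hxS : ∀ x ∈ s, ∀ a b, 1 ≤ a → b ≤ k+1 → Commute x (∑ i ∈ Icc a b, Γ i) := by
    intro x hx a b h1 h2
    exact Commute.sum_right _ _ _ fun i hi => by
      rw [mem_Icc] at hi
      exact hxΓ x hx i (by omega) (by omega)
  have hall : ∀ x ∈ s, ∀ y ∈ s, x * y = y * x := by
    intro x hx y hy
    rcases hy with ⟨j, h1, h2, rfl⟩ | ⟨a, b, h1, h2, h3, rfl⟩ | ⟨p, h1, rfl⟩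
    · exact hxΓ x hx j h1 h2
    · exact commute_ring_inverse_right (hxS x hx a b h1 h3) (hinv a b h1 h2 h3)
    · rcases hx with ⟨i, g1, g2, rfl⟩ | ⟨a, b, g1, g2, g3, rfl⟩ | ⟨q, g1, rfl⟩
      · exact (heΓ p h1 i g1 g2).symm
      · exact ((commute_ring_inverse_right ((hxS (e p) (Or.inr (Or.inr ⟨p, h1, rfl⟩))
          a b g1 g3)) (hinv a b g1 g2 g3)).symm)
      · exact hee q p g1 h1
  have hc : ∀ x y : ↥(Algebra.adjoin ℂ s), x * y = y * x := fun x y =>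
    (Algebra.adjoinCommRingOfComm ℂ hall).mul_comm x y
  set T := Algebra.adjoin ℂ s with hT
  have hmemΓ : ∀ i, 1 ≤ i → i ≤ k+1 → Γ i ∈ T :=
    fun i h1 h2 => Algebra.subset_adjoin (Or.inl ⟨i, h1, h2, rfl⟩)
  have hmemInv : ∀ a b, 1 ≤ a → a ≤ b → b ≤ k+1 → Ring.inverse (∑ i ∈ Icc a b, Γ i) ∈ T :=
    fun a b h1 h2 h3 => Algebra.subset_adjoin (Or.inr (Or.inl ⟨a, b, h1, h2, h3, rfl⟩))
  have hmemE : ∀ p, p ≤ k+1 → e p ∈ T :=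
    fun p h1 => Algebra.subset_adjoin (Or.inr (Or.inr ⟨p, h1, rfl⟩))
  set γ' : ℕ → T := fun i => if h : 1 ≤ i ∧ i ≤ k+1 then ⟨Γ i, hmemΓ i h.1 h.2⟩ else 0 with hγ'
  set e' : ℕ → T := fun p => if h : p ≤ k+1 then ⟨e p, hmemE p h⟩ else 0 with he'
  set f : T →+* E := (Subalgebra.val T).toRingHom with hf
  have hγ'c : ∀ i, 1 ≤ i → i ≤ k+1 → f (γ' i) = Γ i := by
    intro i h1 h2
    simp only [hγ', dif_pos (And.intro h1 h2)]
    rfl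
  have he'c : ∀ p, p ≤ k+1 → f (e' p) = e p := by
    intro p h1
    simp only [he', dif_pos h1]
    rfl
  have hsc : ∀ a b, 1 ≤ a → b ≤ k+1 → f (∑ i ∈ Icc a b, γ' i) = ∑ i ∈ Icc a b, Γ i := by
    intro a b h1 h2
    rw [map_sum]
    exact Finset.sum_congr rfl fun i hi => by
      rw [mem_Icc] at hi
      exact hγ'c i (by omega) (by omega)
  have hinv' : ∀ a b, 1 ≤ a → a ≤ b → b ≤ k + 1 → IsUnit (∑ i ∈ Icc a b, γ' i) := by
    intro a b h1 h2 h3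
    refine ⟨⟨∑ i ∈ Icc a b, γ' i, ⟨Ring.inverse (∑ i ∈ Icc a b, Γ i), hmemInv a b h1 h2 h3⟩,
      ?_, ?_⟩, rfl⟩
    · exact Subtype.ext (by
        show f (∑ i ∈ Icc a b, γ' i) * Ring.inverse (∑ i ∈ Icc a b, Γ i) = 1
        rw [hsc a b h1 h3]
        exact Ring.mul_inverse_cancel _ (hinv a b h1 h2 h3))
    · exact Subtype.ext (by
        show Ring.inverse (∑ i ∈ Icc a b, Γ i) * f (∑ i ∈ Icc a b, γ' i) = 1
        rw [hsc a b h1 h3]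
        exact Ring.inverse_mul_cancel _ (hinv a b h1 h2 h3))
  have hval_inv : ∀ a b, 1 ≤ a → a ≤ b → b ≤ k+1 →
      f (Ring.inverse (∑ i ∈ Icc a b, γ' i)) = Ring.inverse (∑ i ∈ Icc a b, Γ i) := by
    intro a b h1 h2 h3
    rw [map_ring_inverse f (hinv' a b h1 h2 h3), hsc a b h1 h3]
  have hlist : ∀ (n : ℕ) (a b : ℕ → ℕ), (∀ i, i < n → 1 ≤ a i ∧ a i ≤ b i ∧ b i ≤ k+1) →
      f (((List.range n).map fun i => Ring.inverse (∑ j ∈ Icc (a i) (b i), γ' j)).prod)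
        = ((List.range n).map fun i => Ring.inverse (∑ j ∈ Icc (a i) (b i), Γ j)).prod := by
    intro n a b hab
    rw [map_list_prod, List.map_map]
    congr 1
    refine List.map_congr_left fun i hi => ?_
    rw [List.mem_range] at hi
    exact hval_inv (a i) (b i) (hab i hi).1 (hab i hi).2.1 (hab i hi).2.2
  have happ := main_alg' hc k γ' e' hinv'
  have hL : f (Ring.inverse (∑ i ∈ Icc 1 1, γ' i) * (1 - e' 1)
        * ((List.range k).map fun n => Ring.inverse (∑ i ∈ Icc 2 (n+2), γ' i)).prod
      + ∑ p ∈ Icc 1 k, (-1:T)^p * (Ring.inverse (∑ i ∈ Icc 1 (p+1), γ' i) * (1 - e' (p+1)))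
          * (((List.range p).map fun m => Ring.inverse (∑ i ∈ Icc (m+2) (p+1), γ' i)).prod
             * ((List.range (k-p)).map fun n =>
                 Ring.inverse (∑ i ∈ Icc (p+2) (p+2+n), γ' i)).prod))
      = Ring.inverse (∑ i ∈ Icc 1 1, Γ i) * (1 - e 1)
        * ((List.range k).map fun n => Ring.inverse (∑ i ∈ Icc 2 (n+2), Γ i)).prod
      + ∑ p ∈ Icc 1 k, (-1:E)^p * (Ring.inverse (∑ i ∈ Icc 1 (p+1), Γ i) * (1 - e (p+1)))
          * (((List.range p).map fun m => Ring.inverse (∑ i ∈ Icc (m+2) (p+1), Γ i)).prod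
             * ((List.range (k-p)).map fun n =>
                 Ring.inverse (∑ i ∈ Icc (p+2) (p+2+n), Γ i)).prod) := by
    have h1 : f (((List.range k).map fun n =>
        Ring.inverse (∑ j ∈ Icc 2 (n+2), γ' j)).prod)
        = ((List.range k).map fun n => Ring.inverse (∑ j ∈ Icc 2 (n+2), Γ j)).prod :=
      hlist k (fun n => 2) (fun n => n+2) (fun i hi => by beta_reduce; omega)
    rw [map_add, map_mul, map_mul, map_sub, map_one, h1, hval_inv 1 1 le_rfl le_rfl (by omega),
      he'c 1 (by omega), map_sum]
    congr 1
    refine Finset.sum_congr rfl fun p hp => ?_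
    rw [mem_Icc] at hp
    have h2 : f (((List.range p).map fun m =>
        Ring.inverse (∑ j ∈ Icc (m+2) (p+1), γ' j)).prod)
        = ((List.range p).map fun m => Ring.inverse (∑ j ∈ Icc (m+2) (p+1), Γ j)).prod :=
      hlist p (fun m => m+2) (fun m => p+1) (fun i hi => by beta_reduce; omega)
    have h3 : f (((List.range (k-p)).map fun n =>
        Ring.inverse (∑ j ∈ Icc (p+2) (p+2+n), γ' j)).prod)
        = ((List.range (k-p)).map fun n => Ring.inverse (∑ j ∈ Icc (p+2) (p+2+n), Γ j)).prod :=
      hlist (k-p) (fun n => p+2) (fun n => p+2+n) (fun i hi => by beta_reduce; omega)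
    rw [map_mul, map_mul, map_mul, map_pow, map_neg, map_one, map_mul, map_sub, map_one,
      hval_inv 1 (p+1) le_rfl (by omega) (by omega), he'c (p+1) (by omega), h2, h3]
  have hR : f (((List.range (k+1)).map fun n => Ring.inverse (∑ i ∈ Icc 1 (n + 1), γ' i)).prod
      + ∑ p ∈ Icc 1 (k+1), (-1:T)^p * e' p
          * ((List.range p).map fun m => Ring.inverse (∑ i ∈ Icc (m + 1) p, γ' i)).prod
          * ((List.range (k+1-p)).map fun n =>
              Ring.inverse (∑ i ∈ Icc (p + 1) (p + 1 + n), γ' i)).prod)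
      = ((List.range (k+1)).map fun n => Ring.inverse (∑ i ∈ Icc 1 (n + 1), Γ i)).prod
      + ∑ p ∈ Icc 1 (k+1), (-1:E)^p * e p
          * ((List.range p).map fun m => Ring.inverse (∑ i ∈ Icc (m + 1) p, Γ i)).prod
          * ((List.range (k+1-p)).map fun n =>
              Ring.inverse (∑ i ∈ Icc (p + 1) (p + 1 + n), Γ i)).prod := by
    have h1 : f (((List.range (k+1)).map fun n =>
        Ring.inverse (∑ j ∈ Icc 1 (n+1), γ' j)).prod)
        = ((List.range (k+1)).map fun n => Ring.inverse (∑ j ∈ Icc 1 (n+1), Γ j)).prod :=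
      hlist (k+1) (fun n => 1) (fun n => n+1) (fun i hi => by beta_reduce; omega)
    rw [map_add, h1, map_sum]
    congr 1
    refine Finset.sum_congr rfl fun p hp => ?_
    rw [mem_Icc] at hp
    have h2 : f (((List.range p).map fun m =>
        Ring.inverse (∑ j ∈ Icc (m+1) p, γ' j)).prod)
        = ((List.range p).map fun m => Ring.inverse (∑ j ∈ Icc (m+1) p, Γ j)).prod :=
      hlist p (fun m => m+1) (fun m => p) (fun i hi => by beta_reduce; omega)
    have h3 : f (((List.range (k+1-p)).map fun n =>
        Ring.inverse (∑ j ∈ Icc (p+1) (p+1+n), γ' j)).prod)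
        = ((List.range (k+1-p)).map fun n =>
            Ring.inverse (∑ j ∈ Icc (p+1) (p+1+n), Γ j)).prod :=
      hlist (k+1-p) (fun n => p+1) (fun n => p+1+n) (fun i hi => by beta_reduce; omega)
    rw [map_mul, map_mul, map_mul, map_pow, map_neg, map_one,
      he'c p (by omega), h2, h3]
  rw [← hL, ← hR]
  exact congrArg f happ






theorem sum_shift {M : Type*} [AddCommMonoid M] (γ : ℕ → M) (a b : ℕ) :
    ∑ i ∈ Icc a b, γ (i + 1) = ∑ i ∈ Icc (a+1) (b+1), γ i := by
  rw [← Finset.map_add_right_Icc a b 1, Finset.sum_map]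
  simp

theorem Icc_split_bot {M : Type*} [AddCommMonoid M] (γ : ℕ → M) (b : ℕ) (hb : 1 ≤ b) :
    γ 1 + ∑ i ∈ Icc 2 b, γ i = ∑ i ∈ Icc 1 b, γ i := by
  have h1 : Icc 2 b = Ioc 1 b := by
    ext x
    simp only [mem_Icc, mem_Ioc]
    omega
  rw [h1, Finset.Icc_eq_cons_Ioc hb, Finset.sum_cons]

variable {V : Type*} [NormedAddCommGroup V] [NormedSpace ℂ V] [FiniteDimensional ℂ V]

theorem exp_hasDeriv (B : V →L[ℂ] V) (t : ℝ) :
    HasDerivAt (fun s : ℝ => exp (s • B)) (B * exp (t • B)) t := by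
  exact hasDerivAt_exp_smul_const' B t

theorem exp_cont (B : V →L[ℂ] V) : Continuous fun s : ℝ => exp (-(s • B)) :=
  letI : NormedAlgebra ℚ (V →L[ℂ] V) := .restrictScalars ℚ ℂ _
  exp_continuous.comp ((continuous_id.smul continuous_const).neg)

theorem exp_integrable (B : V →L[ℂ] V) (t : ℝ) :
    IntervalIntegrable (fun s : ℝ => exp (-(s • B))) volume 0 t :=
  (exp_cont B).intervalIntegrable 0 t

theorem integral_exp_neg (B : V →L[ℂ] V) (hB : IsUnit B) (t : ℝ) :
    ∫ s in (0:ℝ)..t, exp (-(s • B)) = Ring.inverse B * (1 - exp (-(t • B))) := by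
  have hD : ∀ u ∈ Set.uIcc (0:ℝ) t,
      HasDerivAt (fun s : ℝ => -Ring.inverse B * exp (s • (-B))) (exp (-(u • B))) u := by
    intro u _
    have h1 := (exp_hasDeriv (-B) u).const_mul (-Ring.inverse B)
    refine h1.congr_deriv ?_
    rw [smul_neg, ← mul_assoc, neg_mul_neg, Ring.inverse_mul_cancel B hB, one_mul]
  have h2 := intervalIntegral.integral_eq_sub_of_hasDerivAt hD (exp_integrable B t)
  rw [h2, zero_smul, NormedSpace.exp_zero, mul_one, smul_neg, mul_sub, mul_one]
  noncomm_ring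

theorem integral_const_mulE {a b : ℝ} {f : ℝ → (V →L[ℂ] V)}
    (hf : IntervalIntegrable f volume a b) (c : V →L[ℂ] V) :
    ∫ s in a..b, c * f s = c * ∫ s in a..b, f s := by
  have h := (ContinuousLinearMap.mul ℂ (V →L[ℂ] V) c).intervalIntegral_comp_comm hf
  simpa using h

theorem integral_mul_constE {a b : ℝ} {f : ℝ → (V →L[ℂ] V)}
    (hf : IntervalIntegrable f volume a b) (c : V →L[ℂ] V) :
    ∫ s in a..b, f s * c = (∫ s in a..b, f s) * c := by
  have h := ((ContinuousLinearMap.mul ℂ (V →L[ℂ] V)).flip c).intervalIntegral_comp_comm hf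
  simpa using h






noncomputable def rhsv {V : Type*} [NormedAddCommGroup V] [NormedSpace ℂ V]
    (k : ℕ) (Γ : ℕ → (V →L[ℂ] V)) (t : ℝ) : V →L[ℂ] V :=
  ((List.range k).map fun n =>
      Ring.inverse (∑ i ∈ Finset.Icc 1 (n + 1), Γ i)).prod +
  ∑ p ∈ Finset.Icc 1 k, (-1 : V →L[ℂ] V) ^ p *
    NormedSpace.exp (-(t • ∑ i ∈ Finset.Icc 1 p, Γ i)) *
    ((List.range p).map fun m =>
        Ring.inverse (∑ i ∈ Finset.Icc (m + 1) p, Γ i)).prod *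
    ((List.range (k - p)).map fun n =>
        Ring.inverse (∑ j ∈ Finset.Icc (p + 1) (p + 1 + n), Γ j)).prod

variable {V : Type*} [NormedAddCommGroup V] [NormedSpace ℂ V] [FiniteDimensional ℂ V]

set_option maxHeartbeats 2000000 in
theorem key (k : ℕ) : ∀ (Γ : ℕ → (V →L[ℂ] V)),
    (∀ i j, 1 ≤ i → i ≤ k → 1 ≤ j → j ≤ k → Commute (Γ i) (Γ j)) →
    (∀ a b, 1 ≤ a → a ≤ b → b ≤ k → IsUnit (∑ i ∈ Finset.Icc a b, Γ i)) →
    ∀ (A : V →L[ℂ] V), (∀ i, 1 ≤ i → i ≤ k → Commute A (Γ i)) → ∀ t : ℝ,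
    iterE ((List.range k).map fun j => Γ (j + 1)) A t = exp (-A) * rhsv k Γ t := by
  induction k with
  | zero =>
    intro Γ _ _ A _ t
    show exp (-A) = _
    simp [rhsv]
  | succ k ih =>
    intro Γ hcomm hinv A hA t
    -- commuting helpers
    have hS : ∀ a b a' b', 1 ≤ a → b ≤ k+1 → 1 ≤ a' → b' ≤ k+1 →
        Commute (∑ i ∈ Icc a b, Γ i) (∑ i ∈ Icc a' b', Γ i) := by
      intro a b a' b' h1 h2 h3 h4
      refine Commute.sum_right _ _ _ fun i hi => ?_
      rw [mem_Icc] at hi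
      refine Commute.sum_left _ _ _ fun j hj => ?_
      rw [mem_Icc] at hj
      exact hcomm j i (by omega) (by omega) (by omega) (by omega)
    have hΓS : ∀ j a b, 1 ≤ j → j ≤ k+1 → 1 ≤ a → b ≤ k+1 →
        Commute (Γ j) (∑ i ∈ Icc a b, Γ i) := by
      intro j a b h1 h2 h3 h4
      refine Commute.sum_right _ _ _ fun i hi => ?_
      rw [mem_Icc] at hi
      exact hcomm j i h1 h2 (by omega) (by omega)
    -- the shifted family
    have hcomm' : ∀ i j, 1 ≤ i → i ≤ k → 1 ≤ j → j ≤ k →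
        Commute (Γ (i+1)) (Γ (j+1)) := fun i j h1 h2 h3 h4 =>
      hcomm (i+1) (j+1) (by omega) (by omega) (by omega) (by omega)
    have hinv' : ∀ a b, 1 ≤ a → a ≤ b → b ≤ k →
        IsUnit (∑ i ∈ Finset.Icc a b, Γ (i+1)) := by
      intro a b h1 h2 h3
      rw [sum_shift]
      exact hinv (a+1) (b+1) (by omega) (by omega) (by omega)
    -- split the list
    have hlist : ((List.range (k+1)).map fun j => Γ (j + 1))
        = Γ 1 :: ((List.range k).map fun j => Γ ((j + 1) + 1)) := by
      rw [List.range_succ_eq_map, List.map_cons, List.map_map]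
      rfl
    rw [hlist]
    show (∫ s in (0:ℝ)..t, iterE ((List.range k).map fun j => Γ ((j+1)+1)) (A + s • Γ 1) s) = _
    -- the shifted rhs in terms of the original family
    have hrhs' : ∀ s : ℝ, rhsv k (fun i => Γ (i+1)) s
        = ((List.range k).map fun n => Ring.inverse (∑ i ∈ Icc 2 (n+2), Γ i)).prod
          + ∑ p ∈ Icc 1 k, ((-1 : V →L[ℂ] V)^p * exp (-(s • ∑ i ∈ Icc 2 (p+1), Γ i)))
              * (((List.range p).map fun m => Ring.inverse (∑ i ∈ Icc (m+2) (p+1), Γ i)).prod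
                 * ((List.range (k-p)).map fun n =>
                     Ring.inverse (∑ i ∈ Icc (p+2) (p+2+n), Γ i)).prod) := by
      intro s
      simp only [rhsv]
      congr 1
      · congr 1
        refine List.map_congr_left fun n hn => ?_
        rw [sum_shift]
      · refine Finset.sum_congr rfl fun p hp => ?_
        rw [mem_Icc] at hp
        have e1 : (∑ i ∈ Icc 1 p, Γ (i+1)) = ∑ i ∈ Icc 2 (p+1), Γ i := by rw [sum_shift]
        have e2 : ((List.range p).map fun m => Ring.inverse (∑ i ∈ Icc (m+1) p, Γ (i+1))).prod
            = ((List.range p).map fun m => Ring.inverse (∑ i ∈ Icc (m+2) (p+1), Γ i)).prod := by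
          congr 1
          refine List.map_congr_left fun m hm => ?_
          rw [sum_shift]
        have e3 : ((List.range (k-p)).map fun n =>
              Ring.inverse (∑ j ∈ Icc (p+1) (p+1+n), Γ (j+1))).prod
            = ((List.range (k-p)).map fun n =>
              Ring.inverse (∑ i ∈ Icc (p+2) (p+2+n), Γ i)).prod := by
          congr 1
          refine List.map_congr_left fun n hn => ?_
          rw [sum_shift]
          exact inv_Icc_congr Γ (by omega) (by omega)
        rw [e1, e2, e3, mul_assoc]
    -- pointwise description of the integrand
    have hpoint : ∀ s : ℝ,
        iterE ((List.range k).map fun j => Γ ((j+1)+1)) (A + s • Γ 1) s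
        = exp (-A) *
          (exp (-(s • ∑ i ∈ Icc 1 1, Γ i))
             * ((List.range k).map fun n => Ring.inverse (∑ i ∈ Icc 2 (n+2), Γ i)).prod
           + ∑ p ∈ Icc 1 k, ((-1 : V →L[ℂ] V)^p * exp (-(s • ∑ i ∈ Icc 1 (p+1), Γ i)))
              * (((List.range p).map fun m => Ring.inverse (∑ i ∈ Icc (m+2) (p+1), Γ i)).prod
                 * ((List.range (k-p)).map fun n =>
                     Ring.inverse (∑ i ∈ Icc (p+2) (p+2+n), Γ i)).prod)) := by
      intro s
      have hA' : ∀ i, 1 ≤ i → i ≤ k → Commute (A + s • Γ 1) (Γ (i+1)) := fun i h1 h2 =>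
        Commute.add_left (hA (i+1) (by omega) (by omega))
          ((hcomm 1 (i+1) (by omega) (by omega) (by omega) (by omega)).smul_left s)
      rw [ih (fun i => Γ (i+1)) hcomm' hinv' (A + s • Γ 1) hA' s, hrhs' s]
      have hsplit : exp (-(A + s • Γ 1)) = exp (-A) * exp (-(s • Γ 1)) := by
        rw [neg_add]
        exact (letI : NormedAlgebra ℚ (V →L[ℂ] V) := .restrictScalars ℚ ℂ _; exp_add_of_commute (((hA 1 (le_refl 1) (by omega)).smul_right s).neg_left.neg_right))
      rw [hsplit, mul_assoc]
      congr 1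
      rw [mul_add]
      congr 1
      · have hS11 : (∑ i ∈ Icc 1 1, Γ i) = Γ 1 := by simp
        rw [hS11]
      · rw [Finset.mul_sum]
        refine Finset.sum_congr rfl fun p hp => ?_
        rw [mem_Icc] at hp
        rw [← mul_assoc]
        congr 1
        have hc1 : Commute (exp (-(s • Γ 1))) ((-1 : V →L[ℂ] V)^p) :=
          (Commute.neg_one_right _).pow_right p
        rw [← mul_assoc, hc1.eq, mul_assoc]
        congr 1
        have hc2 : Commute (-(s • Γ 1)) (-(s • ∑ i ∈ Icc 2 (p+1), Γ i)) :=
          (((hΓS 1 2 (p+1) (by omega) (by omega) (by omega) (by omega)).smul_left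
            s).smul_right s).neg_left.neg_right
        rw [← (letI : NormedAlgebra ℚ (V →L[ℂ] V) := .restrictScalars ℚ ℂ _; exp_add_of_commute hc2)]
        congr 1
        rw [← neg_add, ← smul_add, Icc_split_bot Γ (p+1) (by omega)]
    rw [intervalIntegral.integral_congr (fun s _ => hpoint s)]
    -- integrability
    have hint1 : IntervalIntegrable (fun s : ℝ => exp (-(s • ∑ i ∈ Icc 1 1, Γ i))
        * ((List.range k).map fun n => Ring.inverse (∑ i ∈ Icc 2 (n+2), Γ i)).prod)
        volume 0 t := ((exp_cont _).mul continuous_const).intervalIntegrable 0 t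
    have hcont2 : ∀ p : ℕ, Continuous (fun s : ℝ =>
        ((-1 : V →L[ℂ] V)^p * exp (-(s • ∑ i ∈ Icc 1 (p+1), Γ i)))
          * (((List.range p).map fun m => Ring.inverse (∑ i ∈ Icc (m+2) (p+1), Γ i)).prod
             * ((List.range (k-p)).map fun n =>
                 Ring.inverse (∑ i ∈ Icc (p+2) (p+2+n), Γ i)).prod)) := fun p =>
      ((continuous_const.mul (exp_cont _)).mul continuous_const)
    have hint2 : IntervalIntegrable (fun s : ℝ =>
        ∑ p ∈ Icc 1 k, ((-1 : V →L[ℂ] V)^p * exp (-(s • ∑ i ∈ Icc 1 (p+1), Γ i)))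
          * (((List.range p).map fun m => Ring.inverse (∑ i ∈ Icc (m+2) (p+1), Γ i)).prod
             * ((List.range (k-p)).map fun n =>
                 Ring.inverse (∑ i ∈ Icc (p+2) (p+2+n), Γ i)).prod)) volume 0 t := by
      have hcs : Continuous (fun s : ℝ =>
          ∑ p ∈ Icc 1 k, ((-1 : V →L[ℂ] V)^p * exp (-(s • ∑ i ∈ Icc 1 (p+1), Γ i)))
            * (((List.range p).map fun m => Ring.inverse (∑ i ∈ Icc (m+2) (p+1), Γ i)).prod
               * ((List.range (k-p)).map fun n =>
                   Ring.inverse (∑ i ∈ Icc (p+2) (p+2+n), Γ i)).prod)) :=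
        continuous_finset_sum _ fun p _ => hcont2 p
      exact hcs.intervalIntegrable 0 t
    have hintadd : IntervalIntegrable (fun s : ℝ =>
        exp (-(s • ∑ i ∈ Icc 1 1, Γ i))
          * ((List.range k).map fun n => Ring.inverse (∑ i ∈ Icc 2 (n+2), Γ i)).prod
        + ∑ p ∈ Icc 1 k, ((-1 : V →L[ℂ] V)^p * exp (-(s • ∑ i ∈ Icc 1 (p+1), Γ i)))
          * (((List.range p).map fun m => Ring.inverse (∑ i ∈ Icc (m+2) (p+1), Γ i)).prod
             * ((List.range (k-p)).map fun n =>
                 Ring.inverse (∑ i ∈ Icc (p+2) (p+2+n), Γ i)).prod)) volume 0 t :=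
      hint1.add hint2
    rw [integral_const_mulE hintadd (exp (-A))]
    congr 1
    rw [intervalIntegral.integral_add hint1 hint2]
    -- compute the two integrals
    have hI1 : (∫ s in (0:ℝ)..t, exp (-(s • ∑ i ∈ Icc 1 1, Γ i))
        * ((List.range k).map fun n => Ring.inverse (∑ i ∈ Icc 2 (n+2), Γ i)).prod)
        = Ring.inverse (∑ i ∈ Icc 1 1, Γ i) * (1 - exp (-(t • ∑ i ∈ Icc 1 1, Γ i)))
          * ((List.range k).map fun n => Ring.inverse (∑ i ∈ Icc 2 (n+2), Γ i)).prod := by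
      rw [integral_mul_constE (exp_integrable _ t), integral_exp_neg _
        (hinv 1 1 le_rfl le_rfl (by omega)) t]
    have hI2 : (∫ s in (0:ℝ)..t,
        ∑ p ∈ Icc 1 k, ((-1 : V →L[ℂ] V)^p * exp (-(s • ∑ i ∈ Icc 1 (p+1), Γ i)))
          * (((List.range p).map fun m => Ring.inverse (∑ i ∈ Icc (m+2) (p+1), Γ i)).prod
             * ((List.range (k-p)).map fun n =>
                 Ring.inverse (∑ i ∈ Icc (p+2) (p+2+n), Γ i)).prod))
        = ∑ p ∈ Icc 1 k, ((-1 : V →L[ℂ] V)^p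
            * (Ring.inverse (∑ i ∈ Icc 1 (p+1), Γ i)
               * (1 - exp (-(t • ∑ i ∈ Icc 1 (p+1), Γ i)))))
          * (((List.range p).map fun m => Ring.inverse (∑ i ∈ Icc (m+2) (p+1), Γ i)).prod
             * ((List.range (k-p)).map fun n =>
                 Ring.inverse (∑ i ∈ Icc (p+2) (p+2+n), Γ i)).prod) := by
      rw [intervalIntegral.integral_finset_sum (fun p _ =>
        (hcont2 p).intervalIntegrable 0 t)]
      refine Finset.sum_congr rfl fun p hp => ?_
      rw [mem_Icc] at hp
      rw [integral_mul_constE (f := fun s => (-1 : V →L[ℂ] V)^p * exp (-(s • ∑ i ∈ Icc 1 (p+1), Γ i)))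
        ((continuous_const.mul (exp_cont _)).intervalIntegrable 0 t),
        integral_const_mulE (exp_integrable _ t), integral_exp_neg _
          (hinv 1 (p+1) le_rfl (by omega) (by omega)) t]
    rw [hI1, hI2]
    -- apply the algebraic identity
    have hmain := main_alg_E k Γ (fun p => exp (-(t • ∑ i ∈ Icc 1 p, Γ i))) hcomm hinv
      (fun p hp j hj1 hj2 => ((((hΓS j 1 p hj1 hj2 (by omega) hp).smul_right
          t).neg_right).exp_right).symm)
      (fun p q hp hq => ((((hS 1 p 1 q (by omega) hp (by omega) hq).smul_left
          t).smul_right t).neg_left.neg_right).exp)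
    simp only [rhsv]
    exact hmain


end Stmt2Aux
end Stmt2AuxSec

/-- explicit value of the iterated time-ordered Bochner integral of
`exp(-Σ_{j=1}^k t_j Γ_j)` for pairwise commuting `Γ_1,…,Γ_k` whose consecutive sums
`S_{a,b} = Σ_{i=a}^b Γ_i` are all invertible (empty products are `1`,
products are taken in the indicated order). -/
theorem stmt2 (V : Type*) [NormedAddCommGroup V] [NormedSpace ℂ V]
    [FiniteDimensional ℂ V] [Nontrivial V]
    (k : ℕ) (hk : 1 ≤ k) (Γ : ℕ → (V →L[ℂ] V))
    (hcomm : ∀ i j, 1 ≤ i → i ≤ k → 1 ≤ j → j ≤ k → Commute (Γ i) (Γ j))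
    (hinv : ∀ a b, 1 ≤ a → a ≤ b → b ≤ k → IsUnit (∑ i ∈ Finset.Icc a b, Γ i))
    (t : ℝ) :
    iterE ((List.range k).map fun j => Γ (j + 1)) 0 t =
      ((List.range k).map fun n =>
          Ring.inverse (∑ i ∈ Finset.Icc 1 (n + 1), Γ i)).prod +
      ∑ p ∈ Finset.Icc 1 k, (-1 : V →L[ℂ] V) ^ p *
        NormedSpace.exp (-(t • ∑ i ∈ Finset.Icc 1 p, Γ i)) *
        ((List.range p).map fun m =>
            Ring.inverse (∑ i ∈ Finset.Icc (m + 1) p, Γ i)).prod *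
        ((List.range (k - p)).map fun n =>
            Ring.inverse (∑ j ∈ Finset.Icc (p + 1) (p + 1 + n), Γ j)).prod := by
  have h := Stmt2Aux.key k Γ hcomm hinv 0 (fun i _ _ => Commute.zero_left _) t
  rw [neg_zero, NormedSpace.exp_zero, one_mul] at h
  simpa only [Stmt2Aux.rhsv] using h
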